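/- Let A be a commutative ring and B a finitely presented commutative A-algebra, μ: B ⊗_A B → B the multiplication map and J = ker μ. Define the Kähler different D_K(B/A) = F₀(Ω_{B/A}) and the Noether different D_N(B/A) = μ(Ann(J)), both ideals of B. Suppose the finitely presented B-module Ω_{B/A} is generated by m elements. Then one has the inclusions (D_N(B/A))^m ⊆ (Ann_B(Ω_{B/A}))^m ⊆ D_K(B/A) ⊆ D_N(B/A) ⊆ Ann_B(Ω_{B/A}). -/

import Mathlib

open TensorProduct

/-- The 0-th Fitting ideal of a module `M` over `R`: for a finitely presented module it is
the ideal generated by the `n × n` minors of a relation matrix of any presentation of `M`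
with `n` generators; equivalently (by Fitting's lemma, which guarantees independence of the
presentation) the ideal generated by the determinants of all `n × n` matrices whose rows are
relations among the `n` generators.  We take the supremum over all finite presentations. -/
noncomputable def fittingIdeal0 (R M : Type*) [CommRing R] [AddCommGroup M] [Module R M] :
    Ideal R :=
  ⨆ (n : ℕ) (f : (Fin n → R) →ₗ[R] M) (_ : Function.Surjective f),
    Ideal.span { d : R | ∃ P : Matrix (Fin n) (Fin n) R,
      (∀ i, P i ∈ LinearMap.ker f) ∧ d = P.det }

section Aux

variable (A B : Type*) [CommRing A] [CommRing B] [Algebra A B]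

/-- The `B`-action on `Ω[B⁄A]` is induced by the left factor of `B ⊗[A] B`. -/
lemma aux_smul_omega (b : B) (ω : Ω[B⁄A]) :
    b • ω = ((b ⊗ₜ[A] (1 : B) : B ⊗[A] B)) • ω :=
  (algebraMap_smul (B ⊗[A] B) b ω).symm

/-- Scalar action of `B ⊗[A] B` commutes with `toCotangent`. -/
lemma aux_smul_toCot (c : B ⊗[A] B) (x : KaehlerDifferential.ideal A B) :
    c • ((KaehlerDifferential.ideal A B).toCotangent x : Ω[B⁄A])
      = (KaehlerDifferential.ideal A B).toCotangent (c • x) := rfl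

/-- The Noether different annihilates the Kähler differentials. -/
lemma aux_noether_le_ann :
    Ideal.map (Algebra.TensorProduct.lmul' A : B ⊗[A] B →ₐ[A] B)
        (RingHom.ker (Algebra.TensorProduct.lmul' A : B ⊗[A] B →ₐ[A] B)).annihilator
      ≤ Module.annihilator B (Ω[B⁄A]) := by
  rw [Ideal.map_le_iff_le_comap]
  intro x hx
  rw [Ideal.mem_comap, Module.mem_annihilator]
  intro ω
  obtain ⟨⟨j, hj⟩, rfl⟩ := Ideal.toCotangent_surjective (KaehlerDifferential.ideal A B) ω
  set μ := (Algebra.TensorProduct.lmul' A : B ⊗[A] B →ₐ[A] B) with hμ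
  refine ((aux_smul_omega A B _ _).trans (aux_smul_toCot A B _ _)).trans ?_
  refine (Ideal.toCotangent_eq_zero _ _).mpr ?_
  have hxj : x * j = 0 := by
    have := Submodule.mem_annihilator.mp hx j hj
    rwa [smul_eq_mul] at this
  have hmem : x - (μ x) ⊗ₜ[A] (1 : B) ∈ RingHom.ker μ := by
    rw [RingHom.mem_ker, map_sub, Algebra.TensorProduct.lmul'_apply_tmul, mul_one, sub_self]
  have key : ((μ x) ⊗ₜ[A] (1 : B)) * j = -((x - (μ x) ⊗ₜ[A] (1 : B)) * j) := by
    rw [sub_mul, hxj, zero_sub, neg_neg]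
  show ((μ x ⊗ₜ[A] (1 : B)) • (⟨j, hj⟩ : KaehlerDifferential.ideal A B) : B ⊗[A] B)
      ∈ KaehlerDifferential.ideal A B ^ 2
  simp only [SetLike.val_smul, smul_eq_mul]
  rw [key]
  exact neg_mem (by rw [pow_two]; exact Ideal.mul_mem_mul hmem hj)

/-- The key step: the determinant of any relation matrix lies in the Noether different. -/
lemma aux_det_mem_noether [Algebra.FiniteType A B] {n : ℕ}
    (f : (Fin n → B) →ₗ[B] Ω[B⁄A]) (hf : Function.Surjective f)
    (P : Matrix (Fin n) (Fin n) B) (hP : ∀ i, P i ∈ LinearMap.ker f) :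
    P.det ∈ Ideal.map (Algebra.TensorProduct.lmul' A : B ⊗[A] B →ₐ[A] B)
      (RingHom.ker (Algebra.TensorProduct.lmul' A : B ⊗[A] B →ₐ[A] B)).annihilator := by
  classical
  set μ := (Algebra.TensorProduct.lmul' A : B ⊗[A] B →ₐ[A] B) with hμ
  set J : Ideal (B ⊗[A] B) := KaehlerDifferential.ideal A B with hJ
  -- lift the generators of Ω to elements of J
  have hy : ∀ j : Fin n, ∃ x : J, J.toCotangent x = f (Pi.single j 1) :=
    fun j => Ideal.toCotangent_surjective J _
  choose y hy using hy
  -- images of arbitrary vectors under f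
  have hlin : ∀ p : Fin n → B,
      f p = J.toCotangent (∑ j, ((p j ⊗ₜ[A] (1 : B)) : B ⊗[A] B) • y j) := by
    intro p
    rw [LinearMap.pi_apply_eq_sum_univ f p, map_sum]
    refine Finset.sum_congr rfl fun j _ => ?_
    have hsingle : (fun j1 => if j = j1 then (1 : B) else 0) = Pi.single j 1 := by
      funext k; simp [Pi.single_apply, eq_comm]
    rw [hsingle, ← hy j]
    exact (aux_smul_omega A B _ _).trans (aux_smul_toCot A B _ _)
  -- the ideal generated by the lifts
  set K : Ideal (B ⊗[A] B) := Ideal.span (Set.range fun j => (y j : B ⊗[A] B)) with hK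
  have hyK : ∀ j, (y j : B ⊗[A] B) ∈ K := fun j => Ideal.subset_span ⟨j, rfl⟩
  -- decomposition J = K + J²
  have hdecomp : ∀ x : B ⊗[A] B, x ∈ J → ∃ k ∈ K, x - k ∈ J ^ 2 := by
    intro x hx
    obtain ⟨p, hp⟩ := hf (J.toCotangent ⟨x, hx⟩)
    refine ⟨↑(∑ j, ((p j ⊗ₜ[A] (1 : B)) : B ⊗[A] B) • y j), ?_, ?_⟩
    · rw [Submodule.coe_sum]
      exact Ideal.sum_mem _ fun j _ => by
        rw [SetLike.val_smul, smul_eq_mul]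
        exact Ideal.mul_mem_left _ _ (hyK j)
    · have h1 := hlin p
      rw [hp] at h1
      have h2 := (Ideal.toCotangent_eq J).mp h1
      simpa using h2
  -- J is finitely generated
  have hfg : J.FG := KaehlerDifferential.ideal_fg A B
  -- Nakayama: there exists r ≡ 1 mod J with r • J ⊆ K
  have hNak : ∃ r : B ⊗[A] B, r - 1 ∈ J ∧ ∀ x ∈ J, r * x ∈ K := by
    have hle : Submodule.map K.mkQ (J : Submodule (B ⊗[A] B) (B ⊗[A] B))
        ≤ J • Submodule.map K.mkQ (J : Submodule (B ⊗[A] B) (B ⊗[A] B)) := by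
      rintro _ ⟨x, hx, rfl⟩
      obtain ⟨k, hk, hxk⟩ := hdecomp x hx
      have h1 : K.mkQ x = K.mkQ (x - k) := by
        rw [map_sub]
        rw [show K.mkQ k = 0 from (Submodule.Quotient.mk_eq_zero K).mpr hk, sub_zero]
      rw [h1, ← Submodule.map_smul'']
      apply Submodule.mem_map_of_mem
      rwa [Ideal.smul_eq_mul, ← pow_two]
    obtain ⟨r, hr, hr'⟩ :=
      Submodule.exists_sub_one_mem_and_smul_eq_zero_of_fg_of_le_smul J _ (Submodule.FG.map (f := K.mkQ) hfg) hle
    refine ⟨r, hr, fun x hx => ?_⟩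
    have h2 := hr' (K.mkQ x) (Submodule.mem_map_of_mem hx)
    rwa [← map_smul, Submodule.mkQ_apply, Submodule.Quotient.mk_eq_zero, smul_eq_mul] at h2
  obtain ⟨r, hr1, hrK⟩ := hNak
  -- the relations, as elements of J²
  have hrel : ∀ i, (∑ j, ((P i j ⊗ₜ[A] (1 : B)) : B ⊗[A] B) * (y j : B ⊗[A] B)) ∈ J ^ 2 := by
    intro i
    have h1 : J.toCotangent (∑ j, ((P i j ⊗ₜ[A] (1 : B)) : B ⊗[A] B) • y j) = 0 := by
      rw [← hlin (P i)]
      have := LinearMap.mem_ker.mp (hP i); exact this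
    have h2 := (Ideal.toCotangent_eq_zero _ _).mp h1
    simpa [smul_eq_mul] using h2
  -- rewrite r times a relation as a J-combination of the y's
  have hQ : ∀ i, ∃ Q : Fin n → B ⊗[A] B, (∀ j, Q j ∈ J) ∧
      r * (∑ j, ((P i j ⊗ₜ[A] (1 : B)) : B ⊗[A] B) * (y j : B ⊗[A] B))
        = ∑ j, Q j * (y j : B ⊗[A] B) := by
    intro i
    have h1 : r * (∑ j, ((P i j ⊗ₜ[A] (1 : B)) : B ⊗[A] B) * (y j : B ⊗[A] B)) ∈ K * J := by
      have h2 : (∑ j, ((P i j ⊗ₜ[A] (1 : B)) : B ⊗[A] B) * (y j : B ⊗[A] B)) ∈ J * J := by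
        rw [← pow_two]; exact hrel i
      exact Submodule.mul_induction_on h2
        (fun a ha b hb => by rw [← mul_assoc]; exact Ideal.mul_mem_mul (hrK a ha) hb)
        (fun x y hx hy => by rw [mul_add]; exact add_mem hx hy)
    refine Submodule.mul_induction_on h1 ?_ ?_
    · intro a ha b hb
      obtain ⟨c, hc⟩ := (Submodule.mem_span_range_iff_exists_fun _).mp ha
      refine ⟨fun j => c j * b, fun j => Ideal.mul_mem_left _ _ hb, ?_⟩
      rw [← hc, Finset.sum_mul]
      exact Finset.sum_congr rfl fun j _ => by rw [smul_eq_mul]; ring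
    · rintro x y ⟨Q1, hQ1, rfl⟩ ⟨Q2, hQ2, rfl⟩
      exact ⟨fun j => Q1 j + Q2 j, fun j => add_mem (hQ1 j) (hQ2 j), by
        rw [← Finset.sum_add_distrib]
        exact Finset.sum_congr rfl fun j _ => (add_mul _ _ _).symm⟩
  choose Q hQmem hQeq using hQ
  -- the matrix M with M ⬝ y = 0 and μ(M) = P
  set M : Matrix (Fin n) (Fin n) (B ⊗[A] B) :=
    Matrix.of fun i j => r * ((P i j ⊗ₜ[A] (1 : B)) : B ⊗[A] B) - Q i j with hM
  have hMy : ∀ i, ∑ j, M i j * (y j : B ⊗[A] B) = 0 := by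
    intro i
    have h3 : ∑ j, (r * ((P i j ⊗ₜ[A] (1 : B)) : B ⊗[A] B)) * (y j : B ⊗[A] B)
        = r * ∑ j, ((P i j ⊗ₜ[A] (1 : B)) : B ⊗[A] B) * (y j : B ⊗[A] B) := by
      rw [Finset.mul_sum]
      exact Finset.sum_congr rfl fun j _ => (mul_assoc _ _ _)
    simp only [hM, Matrix.of_apply, sub_mul, Finset.sum_sub_distrib, h3, hQeq i, sub_self]
  -- determinant of M kills the y's
  have hdet : ∀ j, M.det * (y j : B ⊗[A] B) = 0 := by
    have h0 : M.mulVec (fun j => (y j : B ⊗[A] B)) = 0 := by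
      funext i
      simp only [Matrix.mulVec, dotProduct]
      exact hMy i
    intro j
    have h1 : M.det • (fun j => (y j : B ⊗[A] B)) = 0 := by
      have h2 := congrArg (M.adjugate.mulVec) h0
      rwa [Matrix.mulVec_mulVec, Matrix.adjugate_mul, Matrix.smul_mulVec,
        Matrix.one_mulVec, Matrix.mulVec_zero] at h2
    have h4 := congrFun h1 j
    simpa [smul_eq_mul] using h4
  -- det M * r annihilates J
  have hann : M.det * r ∈ (RingHom.ker μ).annihilator := by
    rw [Submodule.mem_annihilator]
    intro w hw
    rw [smul_eq_mul, mul_assoc]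
    have h2 : r * w ∈ K := hrK w hw
    have h3 : K ≤ LinearMap.ker (LinearMap.mulLeft (B ⊗[A] B) M.det) := by
      rw [hK, Ideal.span_le]
      rintro _ ⟨j, rfl⟩
      simp only [SetLike.mem_coe, LinearMap.mem_ker, LinearMap.mulLeft_apply]
      exact hdet j
    have h4 := h3 h2
    rwa [LinearMap.mem_ker, LinearMap.mulLeft_apply] at h4
  -- compute μ (det M * r)
  have hμr : μ r = 1 := by
    have h5 : μ (r - 1) = 0 := hr1
    rw [map_sub, map_one, sub_eq_zero] at h5
    exact h5
  have hμdet : μ (M.det * r) = P.det := by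
    rw [map_mul, hμr, mul_one, AlgHom.map_det]
    congr 1
    ext i j
    have hq : μ (Q i j) = 0 := hQmem i j
    simp [hM, hμ, hμr, hq, Algebra.TensorProduct.lmul'_apply_tmul]
    rw [← hμ, hμr, hq, one_mul, sub_zero]
  have h6 := Ideal.mem_map_of_mem μ hann
  rwa [hμdet] at h6

/-- Products of `m` elements of an ideal generate its `m`-th power. -/
lemma aux_pow_le_of_prod_mem {R : Type*} [CommRing R] (I : Ideal R) (m : ℕ) (T : Ideal R)
    (h : ∀ a : Fin m → R, (∀ i, a i ∈ I) → (∏ i, a i) ∈ T) : I ^ m ≤ T := by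
  induction m generalizing T with
  | zero =>
    have h1 : (1 : R) ∈ T := by simpa using h (fun _ => 1) (fun i => i.elim0)
    rw [pow_zero, Ideal.one_eq_top, (Ideal.eq_top_iff_one T).mpr h1]
  | succ k ih =>
    rw [pow_succ, Ideal.mul_le]
    intro a ha b hb
    have h2 : I ^ k ≤ Submodule.comap (LinearMap.mulLeft R b) T := by
      refine ih _ fun c hc => ?_
      simp only [Submodule.mem_comap, LinearMap.mulLeft_apply]
      have h3 := h (Fin.cons b c) (fun i => Fin.cases hb hc i)
      rwa [Fin.prod_cons] at h3
    have h4 := h2 ha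
    rw [Submodule.mem_comap, LinearMap.mulLeft_apply] at h4
    rwa [mul_comm]

/-- The (m-th power of the) annihilator is contained in the Fitting ideal. -/
lemma aux_ann_pow_le_fitting (m : ℕ) (s : Fin m → Ω[B⁄A])
    (hs : Submodule.span B (Set.range s) = ⊤) :
    (Module.annihilator B (Ω[B⁄A])) ^ m ≤ fittingIdeal0 B (Ω[B⁄A]) := by
  classical
  set f : (Fin m → B) →ₗ[B] Ω[B⁄A] := Fintype.linearCombination B s with hfdef
  have hf : Function.Surjective f := by
    rw [← LinearMap.range_eq_top, hfdef, Fintype.range_linearCombination, hs]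
  refine aux_pow_le_of_prod_mem _ m _ fun a ha => ?_
  have hm : (∏ i, a i) ∈ Ideal.span { d : B | ∃ P : Matrix (Fin m) (Fin m) B,
      (∀ i, P i ∈ LinearMap.ker f) ∧ d = P.det } := by
    apply Ideal.subset_span
    refine ⟨Matrix.diagonal a, fun i => ?_, Matrix.det_diagonal.symm⟩
    rw [LinearMap.mem_ker, hfdef, Fintype.linearCombination_apply]
    have h1 : ∀ j : Fin m, Matrix.diagonal a i j • s j
        = if i = j then a i • s i else 0 := by
      intro j
      by_cases h : i = j
      · subst h; simp [Matrix.diagonal_apply_eq]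
      · simp [Matrix.diagonal_apply_ne _ h, h]
    rw [Finset.sum_congr rfl fun j _ => h1 j, Finset.sum_ite_eq]
    simp [Module.mem_annihilator.mp (ha i) (s i)]
  have hle : Ideal.span { d : B | ∃ P : Matrix (Fin m) (Fin m) B,
      (∀ i, P i ∈ LinearMap.ker f) ∧ d = P.det } ≤ fittingIdeal0 B (Ω[B⁄A]) := by
    unfold fittingIdeal0
    exact le_iSup_of_le m (le_iSup_of_le f (le_iSup
      (fun _ : Function.Surjective f => Ideal.span _) hf))
  exact hle hm

end Aux

/-- Let `B` be a finitely presented commutative `A`-algebra,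
`μ : B ⊗[A] B → B` the multiplication map and `J = ker μ`.  Set `D_K(B/A) = F₀(Ω[B⁄A])`
(the Kähler different) and `D_N(B/A) = μ(Ann J)` (the Noether different).  If the finitely
presented `B`-module `Ω[B⁄A]` is generated by `m` elements, then
`D_N^m ⊆ (Ann_B Ω[B⁄A])^m ⊆ D_K ⊆ D_N ⊆ Ann_B Ω[B⁄A]`. -/
theorem differents_inclusions
    (A B : Type*) [CommRing A] [CommRing B] [Algebra A B]
    [Algebra.FinitePresentation A B]
    (m : ℕ) (s : Fin m → Ω[B⁄A]) (hs : Submodule.span B (Set.range s) = ⊤) :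
    (Ideal.map (Algebra.TensorProduct.lmul' A : B ⊗[A] B →ₐ[A] B)
          (RingHom.ker (Algebra.TensorProduct.lmul' A : B ⊗[A] B →ₐ[A] B)).annihilator) ^ m
        ≤ (Module.annihilator B (Ω[B⁄A])) ^ m ∧
      (Module.annihilator B (Ω[B⁄A])) ^ m ≤ fittingIdeal0 B (Ω[B⁄A]) ∧
      fittingIdeal0 B (Ω[B⁄A])
        ≤ Ideal.map (Algebra.TensorProduct.lmul' A : B ⊗[A] B →ₐ[A] B)
            (RingHom.ker (Algebra.TensorProduct.lmul' A : B ⊗[A] B →ₐ[A] B)).annihilator ∧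
      Ideal.map (Algebra.TensorProduct.lmul' A : B ⊗[A] B →ₐ[A] B)
          (RingHom.ker (Algebra.TensorProduct.lmul' A : B ⊗[A] B →ₐ[A] B)).annihilator
        ≤ Module.annihilator B (Ω[B⁄A]) := by
  have h4 := aux_noether_le_ann A B
  have h3 : fittingIdeal0 B (Ω[B⁄A])
      ≤ Ideal.map (Algebra.TensorProduct.lmul' A : B ⊗[A] B →ₐ[A] B)
          (RingHom.ker (Algebra.TensorProduct.lmul' A : B ⊗[A] B →ₐ[A] B)).annihilator := by
    unfold fittingIdeal0
    refine iSup_le fun n => iSup_le fun f => iSup_le fun hf => Ideal.span_le.mpr ?_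
    rintro d ⟨P, hP, rfl⟩
    exact aux_det_mem_noether A B f hf P hP
  exact ⟨Ideal.pow_right_mono h4 m, aux_ann_pow_le_fitting A B m s hs, h3, h4⟩
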